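/- arXiv:2208.14566 — 2 statements merged into one kernel-verified Lean document; each statement's English description precedes it below -/
import Mathlib

section
/- Let r ≥ 3 be an odd integer and let q = exp(2πi/r) ∈ ℂ. Then in the polynomial ring ℂ[x] one has exp_q^<(x) · exp_{q^{-1}}^<(−x) ≡ 1 (mod x^r); that is, x^r divides exp_q^<(x) · exp_{q^{-1}}^<(−x) − 1. -/
open Polynomial

/-- The quantum integer `[n] = (qⁿ - q⁻ⁿ)/(q - q⁻¹)`. -/
noncomputable def qint (q : ℂ) (n : ℕ) : ℂ := (q ^ n - q⁻¹ ^ n) / (q - q⁻¹)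

/-- The quantum factorial `[n]! = [1][2]⋯[n]`, with `[0]! = 1`. -/
noncomputable def qfact (q : ℂ) : ℕ → ℂ
  | 0 => 1
  | n + 1 => qfact q n * qint q (n + 1)

/-- The truncated quantum exponential
`exp_q^<(x) = ∑_{n=0}^{r-1} (q^{n(n-1)/2}/[n]!) xⁿ ∈ ℂ[x]`. -/
noncomputable def qexpLt (q : ℂ) (r : ℕ) : Polynomial ℂ :=
  ∑ n ∈ Finset.range r, C (q ^ (n * (n - 1) / 2) / qfact q n) * X ^ n

lemma qint_inv (q : ℂ) (n : ℕ) : qint q⁻¹ n = qint q n := by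
  rw [qint, qint, inv_inv, ← neg_sub (q ^ n), ← neg_sub q, neg_div_neg_eq]

lemma qfact_inv (q : ℂ) : ∀ n, qfact q⁻¹ n = qfact q n
  | 0 => rfl
  | n + 1 => by rw [qfact, qfact, qfact_inv q n, qint_inv]

lemma qint_zero (q : ℂ) : qint q 0 = 0 := by simp [qint]

lemma tri (a : ℕ) : (a + 1) * a / 2 = a * (a - 1) / 2 + a := by
  rcases a with _ | n
  · rfl
  · have h1 : (n + 2) * (n + 1) = (n + 1) * n + 2 * (n + 1) := by ring
    rw [Nat.succ_sub_one, h1, Nat.add_mul_div_left _ _ (by norm_num : 0 < 2)]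

lemma qint_add (q : ℂ) (a b : ℕ) :
    qint q (a + b) = q ^ b * qint q a + q⁻¹ ^ a * qint q b := by
  rw [qint, qint, qint, ← mul_div_assoc, ← mul_div_assoc, ← add_div]
  congr 1
  rw [pow_add, pow_add]
  ring

noncomputable def cc (q : ℂ) (n : ℕ) : ℂ := q ^ (n * (n - 1) / 2) / qfact q n

noncomputable def dd (q : ℂ) (n : ℕ) : ℂ :=
  (-1) ^ n * (q⁻¹ ^ (n * (n - 1) / 2) / qfact q n)

noncomputable def SS (q : ℂ) (k : ℕ) : ℂ :=
  ∑ i ∈ Finset.range (k + 1), cc q i * dd q (k - i)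

lemma recA (q : ℂ) (a : ℕ) (hf : qfact q a ≠ 0) (hi : qint q (a + 1) ≠ 0) :
    qint q (a + 1) * cc q (a + 1) = q ^ a * cc q a := by
  rw [cc, cc, qfact, Nat.add_sub_cancel, tri, pow_add]
  field_simp

lemma recB (q : ℂ) (a : ℕ) (hf : qfact q a ≠ 0) (hi : qint q (a + 1) ≠ 0) :
    qint q (a + 1) * dd q (a + 1) = -(q⁻¹ ^ a) * dd q a := by
  rw [dd, dd, qfact, Nat.add_sub_cancel, tri, pow_add, pow_succ]
  field_simp
  rw [pow_add]; ring

lemma qint_eq (q : ℂ) {a b n : ℕ} (h : a + b = n) :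
    qint q n = q ^ b * qint q a + q⁻¹ ^ a * qint q b := by
  subst h; exact qint_add q a b

lemma SS_rec (q : ℂ) (k : ℕ) (hf : ∀ n, n ≤ k → qfact q n ≠ 0)
    (hi : ∀ n, n ≤ k → qint q (n + 1) ≠ 0) :
    qint q (k + 1) * SS q (k + 1) = (q ^ k - q⁻¹ ^ k) * SS q k := by
  have key : ∀ i ∈ Finset.range (k + 2),
      qint q (k + 1) * (cc q i * dd q (k + 1 - i)) =
      (q ^ (k + 1 - i) * qint q i) * cc q i * dd q (k + 1 - i)
        + q⁻¹ ^ i * (qint q (k + 1 - i) * dd q (k + 1 - i)) * cc q i := by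
    intro i hi'
    have h1 : i + (k + 1 - i) = k + 1 := by
      have := Finset.mem_range.mp hi'; omega
    rw [qint_eq q h1]; ring
  rw [SS, Finset.mul_sum, Finset.sum_congr rfl key, Finset.sum_add_distrib]
  have e1 : ∑ i ∈ Finset.range (k + 2),
      (q ^ (k + 1 - i) * qint q i) * cc q i * dd q (k + 1 - i) = q ^ k * SS q k := by
    rw [Finset.sum_range_succ']
    rw [show ((q ^ (k + 1 - 0) * qint q 0) * cc q 0 * dd q (k + 1 - 0)) = 0 by
      rw [qint_zero]; ring]
    rw [add_zero, SS, Finset.mul_sum]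
    refine Finset.sum_congr rfl fun j hj => ?_
    have hjk : j ≤ k := Nat.lt_succ_iff.mp (Finset.mem_range.mp hj)
    rw [Nat.succ_sub_succ]
    calc q ^ (k - j) * qint q (j + 1) * cc q (j + 1) * dd q (k - j)
        = q ^ (k - j) * (qint q (j + 1) * cc q (j + 1)) * dd q (k - j) := by ring
      _ = q ^ (k - j) * (q ^ j * cc q j) * dd q (k - j) := by
          rw [recA q j (hf j hjk) (hi j hjk)]
      _ = (q ^ (k - j) * q ^ j) * (cc q j * dd q (k - j)) := by ring
      _ = q ^ k * (cc q j * dd q (k - j)) := by rw [← pow_add, Nat.sub_add_cancel hjk]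
  have e2 : ∑ i ∈ Finset.range (k + 2),
      q⁻¹ ^ i * (qint q (k + 1 - i) * dd q (k + 1 - i)) * cc q i
      = -(q⁻¹ ^ k) * SS q k := by
    rw [Finset.sum_range_succ]
    rw [show (q⁻¹ ^ (k + 1) * (qint q (k + 1 - (k + 1)) * dd q (k + 1 - (k + 1)))
        * cc q (k + 1)) = 0 by rw [Nat.sub_self, qint_zero]; ring]
    rw [add_zero, SS, Finset.mul_sum]
    refine Finset.sum_congr rfl fun i hi' => ?_
    have hik : i ≤ k := Nat.lt_succ_iff.mp (Finset.mem_range.mp hi')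
    rw [show k + 1 - i = (k - i) + 1 by omega,
      recB q (k - i) (hf _ (by omega)) (hi _ (by omega))]
    have hp : q⁻¹ ^ i * q⁻¹ ^ (k - i) = q⁻¹ ^ k := by
      rw [← pow_add]; congr 1; omega
    calc q⁻¹ ^ i * (-(q⁻¹ ^ (k - i)) * dd q (k - i)) * cc q i
        = -(q⁻¹ ^ i * q⁻¹ ^ (k - i)) * (cc q i * dd q (k - i)) := by ring
      _ = -(q⁻¹ ^ k) * (cc q i * dd q (k - i)) := by rw [hp]
  rw [e1, e2]; ring

lemma SS_zero (q : ℂ) (r : ℕ) (hqi : ∀ n, 1 ≤ n → n < r → qint q n ≠ 0)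
    (hqf : ∀ n, n < r → qfact q n ≠ 0) :
    ∀ k, k < r → k ≠ 0 → SS q k = 0 := by
  intro k
  induction k with
  | zero => intro _ h; exact absurd rfl h
  | succ j ih =>
    intro hjr _
    have hrec := SS_rec q j (fun n hn => hqf n (by omega))
      (fun n hn => hqi (n + 1) (by omega) (by omega))
    have hS : (q ^ j - q⁻¹ ^ j) * SS q j = 0 := by
      rcases Nat.eq_zero_or_pos j with h0 | h0
      · subst h0; simp
      · rw [ih (by omega) (by omega), mul_zero]
    exact (mul_eq_zero.mp (hrec.trans hS)).resolve_left
      (hqi (j + 1) (by omega) (by omega))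

/-- For `r ≥ 3` odd and `q = exp(2πi/r)`, one has
`exp_q^<(x) · exp_{q⁻¹}^<(-x) ≡ 1 (mod xʳ)` in `ℂ[x]`. -/
theorem truncated_qexp_inverse (r : ℕ) (hr : 3 ≤ r) (hodd : Odd r)
    (q : ℂ) (hq : q = Complex.exp (2 * Real.pi * Complex.I / r)) :
    (X ^ r : Polynomial ℂ) ∣ qexpLt q r * (qexpLt q⁻¹ r).comp (-X) - 1 := by
  have hr0 : (r : ℕ) ≠ 0 := by omega
  have hprim : IsPrimitiveRoot q r := hq ▸ Complex.isPrimitiveRoot_exp r hr0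
  have hq0 : q ≠ 0 := hq ▸ Complex.exp_ne_zero _
  have hcop : Nat.Coprime r 2 := by
    have h2d : ¬ 2 ∣ r := by rcases hodd with ⟨m, rfl⟩; omega
    exact ((Nat.prime_two.coprime_iff_not_dvd).mpr h2d).symm
  have hpow : ∀ n, 1 ≤ n → n < r → q ^ n - q⁻¹ ^ n ≠ 0 := by
    intro n h1 hn hcon
    have he : q ^ n = q⁻¹ ^ n := sub_eq_zero.mp hcon
    have h2 : q ^ (n * 2) = 1 := by
      rw [mul_two, pow_add]
      nth_rewrite 2 [he]
      rw [← mul_pow, mul_inv_cancel₀ hq0, one_pow]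
    have h3 : r ∣ n * 2 := (hprim.pow_eq_one_iff_dvd _).mp h2
    have h4 : r ∣ n := hcop.dvd_of_dvd_mul_right h3
    exact absurd (Nat.le_of_dvd (by omega) h4) (by omega)
  have hq2 : q - q⁻¹ ≠ 0 := by simpa using hpow 1 (by omega) (by omega)
  have hqi : ∀ n, 1 ≤ n → n < r → qint q n ≠ 0 :=
    fun n h1 hn => div_ne_zero (hpow n h1 hn) hq2
  have hqf : ∀ n, n < r → qfact q n ≠ 0 := by
    intro n
    induction n with
    | zero => intro _; rw [qfact]; exact one_ne_zero
    | succ m ih =>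
      intro h
      rw [qfact]
      exact mul_ne_zero (ih (by omega)) (hqi (m + 1) (by omega) h)
  have cA : ∀ a, (qexpLt q r).coeff a = if a < r then cc q a else 0 := by
    intro a
    rw [qexpLt, finset_sum_coeff]
    simp only [coeff_C_mul, coeff_X_pow, mul_ite, mul_one, mul_zero]
    rw [Finset.sum_ite_eq (Finset.range r) a fun n => q ^ (n * (n - 1) / 2) / qfact q n]
    simp [cc, Finset.mem_range]
  have hcomp : (qexpLt q⁻¹ r).comp (-X) =
      ∑ n ∈ Finset.range r,
        C ((-1 : ℂ) ^ n * (q⁻¹ ^ (n * (n - 1) / 2) / qfact q n)) * X ^ n := by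
    rw [qexpLt, Polynomial.sum_comp]
    refine Finset.sum_congr rfl fun n _ => ?_
    rw [mul_comp, C_comp, pow_comp, X_comp, qfact_inv, neg_pow, map_mul, ← C_1, ← C_neg,
      ← C_pow, mul_comm (C ((-1 : ℂ) ^ n)) (X ^ n)]
    ring
  have cB : ∀ b, ((qexpLt q⁻¹ r).comp (-X)).coeff b = if b < r then dd q b else 0 := by
    intro b
    rw [hcomp, finset_sum_coeff]
    simp only [coeff_C_mul, coeff_X_pow, mul_ite, mul_one, mul_zero]
    rw [Finset.sum_ite_eq (Finset.range r) b
      fun n => (-1 : ℂ) ^ n * (q⁻¹ ^ (n * (n - 1) / 2) / qfact q n)]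
    simp [dd, Finset.mem_range]
  rw [X_pow_dvd_iff]
  intro d hd
  rw [coeff_sub, coeff_mul, Finset.Nat.sum_antidiagonal_eq_sum_range_succ_mk]
  have hsum : ∑ i ∈ Finset.range (d + 1),
      (qexpLt q r).coeff i * ((qexpLt q⁻¹ r).comp (-X)).coeff (d - i) = SS q d := by
    rw [SS]
    refine Finset.sum_congr rfl fun i hi => ?_
    have hid : i ≤ d := Nat.lt_succ_iff.mp (Finset.mem_range.mp hi)
    rw [cA, cB, if_pos (by omega), if_pos (by omega)]
  rw [hsum]
  rcases Nat.eq_zero_or_pos d with h0 | h0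
  · subst h0
    simp [SS, cc, dd, qfact]
  · rw [SS_zero q r hqi hqf d hd (by omega), coeff_one, if_neg (by omega), sub_zero]
end

section
/- Let A be an associative unital ℂ-algebra equipped with a conjugate-linear map † : A → A satisfying †(x·y) = †(y)·†(x) and †(†(x)) = x for all x, y ∈ A. Let V be a finite-dimensional simple A-module carrying a nondegenerate sesquilinear form (·|·) compatible with †. Then there exists λ ∈ ℂ, λ ≠ 0, such that the rescaled form λ·(·|·) is Hermitian, i.e. λ(w|v) = conj(λ(v|w)) for all v, w ∈ V. -/
/-- Let `A` be a unital complex algebra with a conjugate-linear involution `†` reversing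
products, and let `V` be a finite-dimensional simple `A`-module with a nondegenerate
sesquilinear form compatible with `†`.  Then the form is proportional to a Hermitian one:
there is `λ ≠ 0` such that `λ·(·|·)` is Hermitian. -/
theorem simple_module_form_proportional_hermitian {A : Type*} [Ring A] [Algebra ℂ A]
    (dag : A →ₗ⋆[ℂ] A)
    (hdagMul : ∀ x y : A, dag (x * y) = dag y * dag x)
    (hdagInvol : ∀ x : A, dag (dag x) = x)
    {V : Type*} [AddCommGroup V] [Module ℂ V] [FiniteDimensional ℂ V]
    [Module A V] [IsScalarTower ℂ A V] [IsSimpleModule A V]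
    (B : V →ₗ⋆[ℂ] V →ₗ[ℂ] ℂ)
    (hnl : ∀ v : V, (∀ w : V, B v w = 0) → v = 0)
    (hnr : ∀ w : V, (∀ v : V, B v w = 0) → w = 0)
    (hcompat : ∀ (x : A) (v w : V), B (x • v) w = B v (dag x • w)) :
    ∃ lam : ℂ, lam ≠ 0 ∧
      ∀ v w : V, lam * B w v = (starRingEnd ℂ) (lam * B v w) := by
  haveI : Nontrivial V := IsSimpleModule.nontrivial (R := A) (M := V)
  -- scalar commutation
  have hsc : ∀ (c : ℂ) (x : A) (v : V), x • (c • v) = c • (x • v) := by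
    intro c x v
    have h1 : c • v = (c • (1 : A)) • v := by rw [smul_assoc, one_smul]
    rw [h1, smul_smul, mul_smul_comm, mul_one, smul_assoc]
  -- injectivity of B
  have hBinj : Function.Injective B := by
    intro v1 v2 h
    have : B (v1 - v2) = 0 := by rw [map_sub, h, sub_self]
    have h2 : ∀ w, B (v1 - v2) w = 0 := fun w => by rw [this]; rfl
    have := hnl _ h2
    exact sub_eq_zero.mp this
  -- conjugation semilinear automorphism of V via a basis
  let b := Module.Basis.ofVectorSpace ℂ V
  let cc : ((Module.Basis.ofVectorSpaceIndex ℂ V) → ℂ) ≃ₛₗ[starRingEnd ℂ]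
      ((Module.Basis.ofVectorSpaceIndex ℂ V) → ℂ) :=
    { toFun := fun f i => starRingEnd ℂ (f i)
      invFun := fun f i => starRingEnd ℂ (f i)
      map_add' := by intro f g; funext i; simp
      map_smul' := by intro c f; funext i; simp
      left_inv := fun f => by funext i; simp
      right_inv := fun f => by funext i; simp }
  let c : V ≃ₛₗ[starRingEnd ℂ] V := b.equivFun.trans (cc.trans b.equivFun.symm)
  -- B composed with c is linear, injective, hence surjective
  let Bc : V →ₗ[ℂ] (V →ₗ[ℂ] ℂ) := B.comp c.toLinearMap
  have hBcinj : Function.Injective Bc := hBinj.comp c.injective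
  have hfr : Module.finrank ℂ V = Module.finrank ℂ (V →ₗ[ℂ] ℂ) :=
    (Subspace.dual_finrank_eq (K := ℂ) (V := V)).symm
  have hBcsurj : Function.Surjective Bc :=
    (LinearMap.injective_iff_surjective_of_finrank_eq_finrank hfr).mp hBcinj
  have hBsurj : Function.Surjective B := by
    intro f
    obtain ⟨v, hv⟩ := hBcsurj f
    exact ⟨c v, hv⟩
  let e : V ≃ₛₗ[starRingEnd ℂ] (V →ₗ[ℂ] ℂ) :=
    LinearEquiv.ofBijective B ⟨hBinj, hBsurj⟩
  -- the conjugate form γ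
  let γ : V →ₗ⋆[ℂ] (V →ₗ[ℂ] ℂ) :=
    { toFun := fun v =>
        { toFun := fun w => starRingEnd ℂ (B w v)
          map_add' := by intro w1 w2; simp
          map_smul' := by intro d w; simp }
      map_add' := by intro v1 v2; ext w; simp
      map_smul' := by intro d v; ext w; simp }
  -- the intertwiner T
  let T : V →ₗ[ℂ] V := e.symm.toLinearMap.comp (γ : V →ₛₗ[starRingEnd ℂ] (V →ₗ[ℂ] ℂ))
  have hTkey : ∀ v w : V, B (T v) w = starRingEnd ℂ (B w v) := by
    intro v w
    have : B (T v) = γ v := e.apply_symm_apply (γ v)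
    rw [show B (T v) = γ v from this]
    rfl
  -- B w (x • v) = B (dag x • w) v
  have hcompat' : ∀ (x : A) (v w : V), B w (x • v) = B (dag x • w) v := by
    intro x v w
    rw [hcompat (dag x) w v, hdagInvol]
  -- A-equivariance of T
  have hTA : ∀ (x : A) (v : V), T (x • v) = x • T v := by
    intro x v
    apply hBinj
    ext w
    rw [hTkey (x • v) w, hcompat' x v w]
    rw [hcompat x (T v) w, hTkey v (dag x • w)]
  -- eigenvalue of T
  obtain ⟨μ, hμ⟩ := Module.End.exists_eigenvalue (T : Module.End ℂ V)
  obtain ⟨v0, hv0⟩ := hμ.exists_hasEigenvector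
  -- eigenspace as A-submodule
  let S : Submodule A V :=
    { carrier := {v | T v = μ • v}
      add_mem' := by
        intro a b ha hb
        simp only [Set.mem_setOf_eq] at *
        rw [map_add, ha, hb, smul_add]
      zero_mem' := by simp
      smul_mem' := by
        intro x v hv
        simp only [Set.mem_setOf_eq] at *
        rw [hTA, hv, hsc] }
  have hS : S = ⊤ := by
    rcases eq_bot_or_eq_top S with h | h
    · exfalso
      have hv0S : v0 ∈ S := hv0.apply_eq_smul
      rw [h] at hv0S
      exact hv0.2 (by simpa using hv0S)
    · exact h
  have hT : ∀ v : V, T v = μ • v := by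
    intro v
    have : v ∈ S := by rw [hS]; trivial
    exact this
  -- main relation
  have hrel : ∀ v w : V, starRingEnd ℂ (B w v) = starRingEnd ℂ μ * B v w := by
    intro v w
    rw [← hTkey v w, hT v, map_smulₛₗ]
    rfl
  -- μ ≠ 0
  have hμne : μ ≠ 0 := by
    intro h
    obtain ⟨v1, hv1⟩ := exists_ne (0 : V)
    apply hv1
    apply hnr
    intro w
    have := hrel v1 w
    rw [h] at this
    simp at this
    exact this
  -- |μ|² = 1
  obtain ⟨v1, hv1⟩ := exists_ne (0 : V)
  obtain ⟨w1, hw1⟩ : ∃ w, B v1 w ≠ 0 := by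
    by_contra h
    push_neg at h
    exact hv1 (hnl v1 h)
  have hmod : μ * starRingEnd ℂ μ = 1 := by
    have h1 := hrel v1 w1
    have h2 := hrel w1 v1
    have h3 : B v1 w1 = μ * starRingEnd ℂ μ * B v1 w1 := by
      calc B v1 w1 = starRingEnd ℂ (starRingEnd ℂ (B v1 w1)) := by
              rw [Complex.conj_conj]
        _ = starRingEnd ℂ (starRingEnd ℂ μ * B w1 v1) := by rw [h2]
        _ = μ * starRingEnd ℂ (B w1 v1) := by
              rw [map_mul, Complex.conj_conj]
        _ = μ * (starRingEnd ℂ μ * B v1 w1) := by rw [h1]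
        _ = μ * starRingEnd ℂ μ * B v1 w1 := by ring
    have h4 : (μ * starRingEnd ℂ μ - 1) * B v1 w1 = 0 := by
      rw [sub_mul, one_mul, ← h3, sub_self]
    rcases mul_eq_zero.mp h4 with h | h
    · exact sub_eq_zero.mp h
    · exact absurd h hw1
  -- square root
  obtain ⟨z, hz⟩ := IsAlgClosed.exists_pow_nat_eq (starRingEnd ℂ μ) (n := 2) (by norm_num)
  have hzne : z ≠ 0 := by
    intro h
    rw [h] at hz
    simp at hz
    exact hμne (by simpa using congrArg (starRingEnd ℂ) hz.symm)
  have hzz : starRingEnd ℂ z * z = 1 := by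
    have h1 : (starRingEnd ℂ z * z) ^ 2 = 1 := by
      have : starRingEnd ℂ (z ^ 2) * z ^ 2 = 1 := by
        rw [hz, Complex.conj_conj]
        exact hmod
      calc (starRingEnd ℂ z * z) ^ 2 = starRingEnd ℂ (z ^ 2) * z ^ 2 := by
            rw [map_pow]; ring
        _ = 1 := this
    have h2 : starRingEnd ℂ z * z = (Complex.normSq z : ℂ) := by
      rw [← Complex.mul_conj]; ring
    have h3 : starRingEnd ℂ z * z = 1 ∨ starRingEnd ℂ z * z = -1 :=
      mul_self_eq_one_iff.mp (by rw [← sq]; exact h1)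
    rcases h3 with h | h
    · exact h
    · exfalso
      rw [h2] at h
      have : (Complex.normSq z : ℝ) = -1 := by exact_mod_cast h
      linarith [Complex.normSq_nonneg z]
  refine ⟨z, hzne, ?_⟩
  intro v w
  rw [map_mul, hrel w v]
  have hlz : starRingEnd ℂ z * starRingEnd ℂ μ = z := by
    calc starRingEnd ℂ z * starRingEnd ℂ μ = starRingEnd ℂ z * z ^ 2 := by rw [hz]
      _ = (starRingEnd ℂ z * z) * z := by ring
      _ = z := by rw [hzz, one_mul]
  rw [← mul_assoc, hlz]
end
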